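/- arXiv:1704.03292 — 3 statements merged into one kernel-verified Lean document; each statement's English description precedes it below -/
import Mathlib

section
/- Let T = {s_1, …, s_k} be a team with s_1 < … < s_k (in a fixed total order on assignments), k ≥ 3, s_1 = 0, and let φ be a conjunction of dependence atoms. Then T ⊨ φ if and only if: {s_1,…,s_{k−1}} ⊨ φ, {s_1,…,s_{k−2}, s_k} ⊨ φ, and {0, s_{k−1} + s_k} ⊨ φ. -/
/-- A team `T` satisfies a conjunction of dependence atoms given as a list of pairs. -/
def SatDepList {n : ℕ} (T : Finset (Fin n → ZMod 2))
    (L : List (Set (Fin n) × Set (Fin n))) : Prop :=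
  ∀ pq ∈ L, ∀ s ∈ T, ∀ t ∈ T, (∀ i ∈ pq.1, s i = t i) → ∀ i ∈ pq.2, s i = t i

lemma z2_add_eq_zero_iff (x y : ZMod 2) : x + y = 0 ↔ x = y := by
  revert x y; decide

lemma satDepList_subset {n : ℕ} {T T' : Finset (Fin n → ZMod 2)}
    {L : List (Set (Fin n) × Set (Fin n))} (hsub : T' ⊆ T)
    (h : SatDepList T L) : SatDepList T' L := by
  intro pq hpq x hx y hy hP i hQ
  exact h pq hpq x (hsub hx) y (hsub hy) hP i hQ

theorem reduce_satisfying_teams {n k : ℕ} (hk : 3 ≤ k)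
    [LinearOrder (Fin n → ZMod 2)]
    (s : Fin k → (Fin n → ZMod 2)) (hmono : StrictMono s)
    (h0 : s ⟨0, by omega⟩ = 0)
    (L : List (Set (Fin n) × Set (Fin n))) :
    SatDepList (Finset.univ.image s) L ↔
      (SatDepList ((Finset.univ.image s).erase (s ⟨k - 1, by omega⟩)) L ∧
       SatDepList ((Finset.univ.image s).erase (s ⟨k - 2, by omega⟩)) L ∧
       SatDepList ({0, s ⟨k - 2, by omega⟩ + s ⟨k - 1, by omega⟩} :
          Finset (Fin n → ZMod 2)) L) := by
  set a := s ⟨k - 2, by omega⟩ with ha_def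
  set b := s ⟨k - 1, by omega⟩ with hb_def
  have ha : a ∈ Finset.univ.image s := Finset.mem_image.2 ⟨_, Finset.mem_univ _, rfl⟩
  have hb : b ∈ Finset.univ.image s := Finset.mem_image.2 ⟨_, Finset.mem_univ _, rfl⟩
  have hab : a ≠ b := by
    intro h
    have := hmono.injective h
    have : k - 2 = k - 1 := congrArg Fin.val this
    omega
  constructor
  · intro hT
    refine ⟨satDepList_subset (Finset.erase_subset _ _) hT,
            satDepList_subset (Finset.erase_subset _ _) hT, ?_⟩
    intro pq hpq x hx y hy hP i hQ
    have hmem : ∀ z ∈ ({0, a + b} : Finset (Fin n → ZMod 2)),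
        z = 0 ∨ z = a + b := by
      intro z hz
      rcases Finset.mem_insert.1 hz with h | h
      · exact Or.inl h
      · exact Or.inr (Finset.mem_singleton.1 h)
    have key : (∀ j ∈ pq.1, (0 : Fin n → ZMod 2) j = (a + b) j) →
        ∀ j ∈ pq.2, (0 : Fin n → ZMod 2) j = (a + b) j := by
      intro hP' j hj
      have habP : ∀ j ∈ pq.1, a j = b j := by
        intro j hj
        have := hP' j hj
        simp only [Pi.zero_apply, Pi.add_apply] at this
        exact (z2_add_eq_zero_iff _ _).1 this.symm
      have := hT pq hpq a ha b hb habP j hj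
      simp only [Pi.zero_apply, Pi.add_apply]
      exact ((z2_add_eq_zero_iff _ _).2 this).symm
    rcases hmem x hx with hx' | hx' <;> rcases hmem y hy with hy' | hy' <;>
      subst hx' <;> subst hy'
    · rfl
    · exact key hP i hQ
    · exact (key (fun j hj => (hP j hj).symm) i hQ).symm
    · rfl
  · rintro ⟨h1, h2, h3⟩
    intro pq hpq x hx y hy hP i hQ
    have pairmem0 : (0 : Fin n → ZMod 2) ∈ ({0, a + b} : Finset (Fin n → ZMod 2)) :=
      Finset.mem_insert_self _ _
    have pairmem1 : a + b ∈ ({0, a + b} : Finset (Fin n → ZMod 2)) :=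
      Finset.mem_insert_of_mem (Finset.mem_singleton_self _)
    have pairkey : (∀ j ∈ pq.1, a j = b j) → a i = b i := by
      intro hPa
      have hP0 : ∀ j ∈ pq.1, (0 : Fin n → ZMod 2) j = (a + b) j := by
        intro j hj
        simp only [Pi.zero_apply, Pi.add_apply]
        exact ((z2_add_eq_zero_iff _ _).2 (hPa j hj)).symm
      have := h3 pq hpq 0 pairmem0 (a + b) pairmem1 hP0 i hQ
      simp only [Pi.zero_apply, Pi.add_apply] at this
      exact (z2_add_eq_zero_iff _ _).1 this.symm
    by_cases hxb : x = b
    · by_cases hyb : y = b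
      · rw [hxb, hyb]
      · by_cases hya : y = a
        · subst hxb; subst hya
          exact (pairkey (fun j hj => (hP j hj).symm)).symm
        · exact h2 pq hpq x (Finset.mem_erase.2 ⟨hxb ▸ hab.symm, hx⟩) y
            (Finset.mem_erase.2 ⟨hya, hy⟩) hP i hQ
    · by_cases hyb : y = b
      · by_cases hxa : x = a
        · subst hyb; subst hxa
          exact pairkey hP
        · exact h2 pq hpq x (Finset.mem_erase.2 ⟨hxa, hx⟩) y
            (Finset.mem_erase.2 ⟨hyb ▸ hab.symm, hy⟩) hP i hQ
      · exact h1 pq hpq x (Finset.mem_erase.2 ⟨hxb, hx⟩) y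
          (Finset.mem_erase.2 ⟨hyb, hy⟩) hP i hQ
end

section
/- Fix k ≥ 2 variables x_1,…,x_k and let φ = ⋀_{i=1}^{k−1} dep(x_i, x_k). Then for every team T with T ⊨ φ and |T| ≥ 3, all assignments in T agree on x_k, i.e., |T restricted to {x_k}| = 1. -/
theorem enumteamsize_counterexample {k : ℕ} (hk : 2 ≤ k)
    (T : Finset (Fin k → ZMod 2))
    (hsat : ∀ i : Fin k, (i : ℕ) < k - 1 → ∀ s ∈ T, ∀ t ∈ T,
      s i = t i → s ⟨k - 1, by omega⟩ = t ⟨k - 1, by omega⟩)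
    (hcard : 3 ≤ T.card) :
    (T.image fun s => s ⟨k - 1, by omega⟩).card = 1 := by
  have hkK : k - 1 < k := by omega
  set K : Fin k := ⟨k - 1, hkK⟩ with hKdef
  have key : ∀ s ∈ T, ∀ t ∈ T, s K = t K := by
    intro s hs t ht
    by_contra hne
    have hdiff : ∀ i : Fin k, (i : ℕ) < k - 1 → s i ≠ t i :=
      fun i hi h => hne (hsat i hi s hs t ht h)
    obtain ⟨u, hu⟩ : ((T.erase t).erase s).Nonempty := by
      rw [← Finset.card_pos]
      have h1 := Finset.pred_card_le_card_erase (a := s) (s := T.erase t)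
      have h2 := Finset.pred_card_le_card_erase (a := t) (s := T)
      omega
    have hus : u ≠ s := Finset.ne_of_mem_erase hu
    have hut : u ≠ t := Finset.ne_of_mem_erase (Finset.mem_of_mem_erase hu)
    have huT : u ∈ T := Finset.mem_of_mem_erase (Finset.mem_of_mem_erase hu)
    have two : ∀ a b c : ZMod 2, a ≠ b → c ≠ a → c = b := by decide
    rcases eq_or_ne (u K) (s K) with h | h
    · apply hus
      funext i
      rcases lt_or_ge (i : ℕ) (k - 1) with hi | hi
      · by_contra hne'
        have h1 : u i = t i := two _ _ _ (hdiff i hi) hne'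
        have h2 := hsat i hi u huT t ht h1
        exact hne (h ▸ h2)
      · have hiK : i = K := by
          apply Fin.ext
          have := i.isLt
          simp only [hKdef]
          omega
        rw [hiK]; exact h
    · have h' : u K = t K := two _ _ _ hne h
      apply hut
      funext i
      rcases lt_or_ge (i : ℕ) (k - 1) with hi | hi
      · by_contra hne'
        have h1 : u i = s i := two _ _ _ (fun e => hdiff i hi e.symm) hne'
        have h2 := hsat i hi u huT s hs h1
        exact h h2
      · have hiK : i = K := by
          apply Fin.ext
          have := i.isLt
          simp only [hKdef]
          omega
        rw [hiK]; exact h'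
  obtain ⟨s, hs⟩ : T.Nonempty := Finset.card_pos.1 (by omega)
  rw [Finset.card_eq_one]
  refine ⟨s K, Finset.eq_singleton_iff_nonempty_unique_mem.2
    ⟨⟨s K, Finset.mem_image_of_mem _ hs⟩, ?_⟩⟩
  rintro a ha
  obtain ⟨t, ht, rfl⟩ := Finset.mem_image.1 ha
  exact key t ht s hs
end

section
/- Let S be a finite totally ordered set and X ⊆ P(S) a downward closed family of subsets (T ∈ X and R ⊆ T imply R ∈ X). Order X lexicographically: compare sets by listing their elements in increasing order; a set R precedes S' if at the first point of difference R has a smaller element, or R is a proper initial-prefix of S' as sorted sequences. Then for any two consecutive elements R, R' of X in this lexicographic order, the symmetric difference satisfies |R △ R'| ≤ 3. -/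
private lemma lex_nil_aux {α : Type*} [LinearOrder α] {l : List α} (h : l ≠ []) :
    List.Lex (· < ·) [] l := by
  cases l with
  | nil => exact absurd rfl h
  | cons a t => exact List.Lex.nil

private lemma lex_append_aux {α : Type*} [LinearOrder α] (p : List α) {l₁ l₂ : List α}
    (h : List.Lex (· < ·) l₁ l₂) : List.Lex (· < ·) (p ++ l₁) (p ++ l₂) := by
  induction p with
  | nil => exact h
  | cons a p ih => exact List.Lex.cons ih

private lemma lex_decomp_aux {α : Type*} [LinearOrder α] {l l' : List α}
    (h : List.Lex (· < ·) l l') :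
    ∃ p b t', l' = p ++ b :: t' ∧ (l = p ∨ ∃ a t, l = p ++ a :: t ∧ a < b) := by
  induction h with
  | nil => exact ⟨[], _, _, rfl, Or.inl rfl⟩
  | @cons a l₁ l₂ h ih =>
    obtain ⟨p, b, t', rfl, h2⟩ := ih
    refine ⟨a :: p, b, t', rfl, ?_⟩
    rcases h2 with rfl | ⟨a', t, rfl, hab⟩
    · exact Or.inl rfl
    · exact Or.inr ⟨a', t, rfl, hab⟩
  | @rel a l₁ b l₂ hab => exact ⟨[], b, l₂, rfl, Or.inr ⟨a, l₁, rfl, hab⟩⟩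

theorem symmetric_difference_lex {α : Type*} [Fintype α] [LinearOrder α]
    (X : Set (Finset α))
    (hdc : ∀ T ∈ X, ∀ R ⊆ T, R ∈ X)
    (R R' : Finset α) (hR : R ∈ X) (hR' : R' ∈ X)
    (hlt : List.Lex (· < ·) (R.sort (· ≤ ·)) (R'.sort (· ≤ ·)))
    (hcons : ∀ Q ∈ X, ¬(List.Lex (· < ·) (R.sort (· ≤ ·)) (Q.sort (· ≤ ·)) ∧
      List.Lex (· < ·) (Q.sort (· ≤ ·)) (R'.sort (· ≤ ·)))) :
    (symmDiff R R').card ≤ 3 := by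
  classical
  obtain ⟨p, b, t', hl', hcase⟩ := lex_decomp_aux hlt
  have hsR' : List.Pairwise (· < ·) (R'.sort (· ≤ ·)) := (Finset.sortedLT_sort R').pairwise
  have hsR : List.Pairwise (· < ·) (R.sort (· ≤ ·)) := (Finset.sortedLT_sort R).pairwise
  -- the candidate set Q = p ++ [b]
  have hsub : List.Sublist (p ++ [b]) (R'.sort (· ≤ ·)) := by
    rw [hl']
    exact ((List.nil_sublist t').cons₂ b).append_left p
  have hspb : List.Pairwise (· < ·) (p ++ [b]) := List.Pairwise.sublist hsub hsR'
  have hnodup : (p ++ [b]).Nodup := hspb.imp ne_of_lt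
  have hQsort : (p ++ [b]).toFinset.sort (· ≤ ·) = p ++ [b] :=
    (List.toFinset_sort _ hnodup).2 (hspb.imp le_of_lt)
  have hQsub : (p ++ [b]).toFinset ⊆ R' := by
    intro x hx
    rw [List.mem_toFinset] at hx
    exact (Finset.mem_sort _).1 (hsub.subset hx)
  have hQX : (p ++ [b]).toFinset ∈ X := hdc R' hR' _ hQsub
  -- R < Q
  have hRQ : List.Lex (· < ·) (R.sort (· ≤ ·)) ((p ++ [b]).toFinset.sort (· ≤ ·)) := by
    rw [hQsort]
    rcases hcase with hp | ⟨a, t, hl, hab⟩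
    · rw [hp]
      have := lex_append_aux p (lex_nil_aux (l := [b]) (by simp))
      simpa using this
    · rw [hl]; exact lex_append_aux p (List.Lex.rel hab)
  -- t' must be empty
  have ht' : t' = [] := by
    by_contra h
    obtain ⟨c, t'', rfl⟩ := List.exists_cons_of_ne_nil h
    refine hcons _ hQX ⟨hRQ, ?_⟩
    rw [hQsort, hl']
    have : List.Lex (· < ·) ([b] : List α) (b :: c :: t'') :=
      List.Lex.cons (lex_nil_aux (by simp))
    exact lex_append_aux p this
  subst ht'
  have hR'eq : R' = (p ++ [b]).toFinset := by
    have := Finset.sort_toFinset R' (· ≤ ·)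
    rw [hl'] at this
    exact this.symm
  have hmemR' : ∀ x, x ∈ R' ↔ x ∈ p ++ [b] := by
    intro x; rw [hR'eq, List.mem_toFinset]
  have hmemR : ∀ x, x ∈ R ↔ x ∈ R.sort (· ≤ ·) := fun x => (Finset.mem_sort _).symm
  rcases hcase with hl | ⟨a, t, hl, hab⟩
  · -- R.sort = p : symmDiff = {b}
    have hsubset : symmDiff R R' ⊆ {b} := by
      intro x hx
      rw [Finset.mem_symmDiff] at hx
      rcases hx with ⟨hx1, hx2⟩ | ⟨hx1, hx2⟩
      · exfalso
        exact hx2 ((hmemR' x).2 (List.mem_append_left _ ((hl ▸ (hmemR x).1 hx1))))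
      · rcases List.mem_append.1 ((hmemR' x).1 hx1) with h | h
        · exact absurd ((hmemR x).2 (hl ▸ h)) hx2
        · simpa using h
    calc (symmDiff R R').card ≤ ({b} : Finset α).card := Finset.card_le_card hsubset
      _ ≤ 3 := by simp
  · -- R.sort = p ++ a :: t with a < b
    -- t has length ≤ 1
    have ht : t.length ≤ 1 := by
      by_contra h
      push_neg at h
      match t, h with
      | c :: d :: t₂, _ =>
        have hsub2 : List.Sublist (p ++ a :: d :: t₂) (R.sort (· ≤ ·)) := by
          rw [hl]
          exact ((List.sublist_cons_self c (d :: t₂)).cons₂ a).append_left p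
        have hs2 : List.Pairwise (· < ·) (p ++ a :: d :: t₂) := List.Pairwise.sublist hsub2 hsR
        have hn2 : (p ++ a :: d :: t₂).Nodup := hs2.imp ne_of_lt
        have hQ'sort : (p ++ a :: d :: t₂).toFinset.sort (· ≤ ·) = p ++ a :: d :: t₂ :=
          (List.toFinset_sort _ hn2).2 (hs2.imp le_of_lt)
        have hQ'sub : (p ++ a :: d :: t₂).toFinset ⊆ R := by
          intro x hx
          rw [List.mem_toFinset] at hx
          exact (Finset.mem_sort _).1 (hsub2.subset hx)
        have hQ'X := hdc R hR _ hQ'sub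
        refine hcons _ hQ'X ⟨?_, ?_⟩
        · rw [hQ'sort, hl]
          have hcd : c < d := by
            have hs3 : List.Pairwise (· < ·) (c :: d :: t₂) :=
              List.Pairwise.sublist (by rw [hl]; exact ((List.sublist_cons_self a _).trans
                (List.sublist_append_right p _))) hsR
            exact (List.pairwise_cons.1 hs3).1 d (by simp)
          have h1 : List.Lex (· < ·) (c :: d :: t₂) (d :: t₂) := List.Lex.rel hcd
          have := lex_append_aux (p ++ [a]) h1
          simpa using this
        · rw [hQ'sort, hl']
          exact lex_append_aux p (List.Lex.rel hab)
    -- symmDiff ⊆ toFinset of a :: t ++ [b]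
    have hsubset : symmDiff R R' ⊆ (a :: t ++ [b]).toFinset := by
      intro x hx
      rw [Finset.mem_symmDiff] at hx
      rw [List.mem_toFinset]
      rcases hx with ⟨hx1, hx2⟩ | ⟨hx1, hx2⟩
      · have := (hmemR x).1 hx1
        rw [hl, List.mem_append] at this
        rcases this with h | h
        · exact absurd ((hmemR' x).2 (List.mem_append_left _ h)) hx2
        · exact List.mem_append_left _ h
      · rcases List.mem_append.1 ((hmemR' x).1 hx1) with h | h
        · exact absurd ((hmemR x).2 (by rw [hl]; exact List.mem_append_left _ h)) hx2
        · exact List.mem_append_right _ h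
    calc (symmDiff R R').card ≤ (a :: t ++ [b]).toFinset.card :=
          Finset.card_le_card hsubset
      _ ≤ (a :: t ++ [b]).length := List.toFinset_card_le _
      _ ≤ 3 := by simp; omega
end
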